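/- arXiv:2004.14494 — 4 statements merged into one kernel-verified Lean document; each statement's English description precedes it below -/
import Mathlib

section
/- Let d, N ≥ 1 and let W : (ℝ^d)^N → ℝ be the quadratic social welfare function W(u) = c₀ + ⟨b, u⟩ + (1/2) uᵀ M u. Suppose there are constants 0 < μ ≤ L such that every diagonal block satisfies −L·I ⪯ M_{nn} ⪯ −μ·I (in the positive-semidefinite order), and there is ε ≥ 0 with ‖M_{nm}‖₂ ≤ ε for all n ≠ m, where ε < μ²/(N·L). Define the simultaneous fictitious-play update u^t by u^t_n = u^{t−1}_n − M_{nn}^{−1} g_n(u^{t−1}) for every n = 1,…,N. Then for every t ≥ 1, W(u^t) ≥ W(u^{t−1}) + (1/2)(1/L − εN/μ²) · Σ_{n=1}^N ‖g_n(u^{t−1})‖², so the sequence (W(u^t))_{t≥0} is nondecreasing; moreover M is negative definite, W is bounded above, and (W(u^t))_{t≥0} converges. -/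
open Matrix RealInnerProductSpace BigOperators Filter

namespace SFP

variable {d : ℕ}

lemma inner_toELin (A : Matrix (Fin d) (Fin d) ℝ) (x y : EuclideanSpace ℝ (Fin d)) :
    ⟪x, A.toEuclideanLin y⟫ = (WithLp.equiv 2 _ x) ⬝ᵥ (A *ᵥ WithLp.equiv 2 _ y) := by
  simp [PiLp.inner_apply, Matrix.toEuclideanLin_apply, dotProduct, RCLike.inner_apply]
  exact Finset.sum_congr rfl fun _ _ => mul_comm _ _

lemma psd_inner_nonneg {A : Matrix (Fin d) (Fin d) ℝ} (hA : A.PosSemidef)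
    (x : EuclideanSpace ℝ (Fin d)) : 0 ≤ ⟪x, A.toEuclideanLin x⟫ := by
  rw [inner_toELin]
  simpa using hA.dotProduct_mulVec_nonneg (WithLp.equiv 2 (Fin d → ℝ) x)

lemma inner_transpose (A : Matrix (Fin d) (Fin d) ℝ) (x y : EuclideanSpace ℝ (Fin d)) :
    ⟪x, A.toEuclideanLin y⟫ = ⟪Aᵀ.toEuclideanLin x, y⟫ := by
  rw [real_inner_comm]
  simp [PiLp.inner_apply, Matrix.toEuclideanLin_apply, Matrix.mulVec, dotProduct,
    RCLike.inner_apply, Finset.mul_sum, Finset.sum_mul, Matrix.transpose_apply]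
  rw [Finset.sum_comm]
  congr 1; ext i; congr 1; ext j; ring

lemma inner_lower {P : Matrix (Fin d) (Fin d) ℝ} {μ : ℝ}
    (hP : (P - μ • (1 : Matrix (Fin d) (Fin d) ℝ)).PosSemidef) (x : EuclideanSpace ℝ (Fin d)) :
    μ * ‖x‖ ^ 2 ≤ ⟪x, P.toEuclideanLin x⟫ := by
  have h := psd_inner_nonneg hP x
  have h1 : (1 : Matrix (Fin d) (Fin d) ℝ).toEuclideanLin x = x := by
    simp [Matrix.toEuclideanLin_apply]
  have e : (P - μ • (1 : Matrix (Fin d) (Fin d) ℝ)).toEuclideanLin x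
      = P.toEuclideanLin x - μ • x := by
    rw [map_sub, _root_.map_smul]; simp [h1]
  rw [e, inner_sub_right, real_inner_smul_right, real_inner_self_eq_norm_sq] at h
  linarith

lemma key_psd {P : Matrix (Fin d) (Fin d) ℝ} {L : ℝ} (hP : P.PosSemidef)
    (hLP : (L • (1 : Matrix (Fin d) (Fin d) ℝ) - P).PosSemidef) :
    (L • P - P * P).PosSemidef := by
  obtain ⟨S, hSh, hSS⟩ : ∃ S : Matrix (Fin d) (Fin d) ℝ, Sᴴ = S ∧ S * S = P :=
    by open scoped MatrixOrder in exact
      ⟨CFC.sqrt P, (CFC.sqrt_nonneg P).posSemidef.1, CFC.sqrt_mul_sqrt_self P hP.nonneg⟩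
  have h := hLP.conjTranspose_mul_mul_same S
  rw [hSh] at h
  subst hSS
  have e : S * (L • (1 : Matrix (Fin d) (Fin d) ℝ) - S * S) * S
      = L • (S * S) - (S * S) * (S * S) := by noncomm_ring
  rwa [e] at h

lemma norm_map_sq_le {P : Matrix (Fin d) (Fin d) ℝ} {L : ℝ} (hP : P.PosSemidef)
    (hLP : (L • (1 : Matrix (Fin d) (Fin d) ℝ) - P).PosSemidef) (x : EuclideanSpace ℝ (Fin d)) :
    ‖P.toEuclideanLin x‖ ^ 2 ≤ L * ⟪x, P.toEuclideanLin x⟫ := by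
  have h0 := psd_inner_nonneg (key_psd hP hLP) x
  have e1 : (L • P - P * P).toEuclideanLin x
      = L • P.toEuclideanLin x - P.toEuclideanLin (P.toEuclideanLin x) := by
    rw [map_sub, _root_.map_smul]
    simp [Matrix.toEuclideanLin_apply, Matrix.mulVec_mulVec]
  rw [e1, inner_sub_right, real_inner_smul_right] at h0
  have hsym : Pᵀ = P := by
    rw [← Matrix.conjTranspose_eq_transpose_of_trivial]; exact hP.1
  have e2 : ⟪x, P.toEuclideanLin (P.toEuclideanLin x)⟫ = ‖P.toEuclideanLin x‖ ^ 2 := by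
    rw [inner_transpose, hsym, real_inner_self_eq_norm_sq]
  linarith

lemma smul_one_posdef {c : ℝ} (hc : 0 < c) :
    (c • (1 : Matrix (Fin d) (Fin d) ℝ)).PosDef := by
  rw [Matrix.smul_one_eq_diagonal]
  exact Matrix.posDef_diagonal_iff.mpr fun _ => hc

lemma neg_diag_posdef {A : Matrix (Fin d) (Fin d) ℝ} {μ : ℝ} (hμ : 0 < μ)
    (hup : (-(μ • (1 : Matrix (Fin d) (Fin d) ℝ)) - A).PosSemidef) : (-A).PosDef := by
  have e : -A = (-(μ • (1 : Matrix (Fin d) (Fin d) ℝ)) - A) + μ • 1 := by abel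
  rw [e]
  exact Matrix.PosDef.posSemidef_add hup (smul_one_posdef hμ)

lemma diag_det_isUnit {A : Matrix (Fin d) (Fin d) ℝ} {μ : ℝ} (hμ : 0 < μ)
    (hup : (-(μ • (1 : Matrix (Fin d) (Fin d) ℝ)) - A).PosSemidef) : IsUnit A.det := by
  have h := (neg_diag_posdef hμ hup).det_pos
  rw [Matrix.det_neg] at h
  apply isUnit_iff_ne_zero.mpr
  intro h0
  rw [h0, mul_zero] at h
  exact lt_irrefl 0 h

lemma block_facts {A : Matrix (Fin d) (Fin d) ℝ} {μ L : ℝ} (hμ : 0 < μ) (hμL : μ ≤ L)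
    (hlo : (A + L • (1 : Matrix (Fin d) (Fin d) ℝ)).PosSemidef)
    (hup : (-(μ • (1 : Matrix (Fin d) (Fin d) ℝ)) - A).PosSemidef)
    (g δ : EuclideanSpace ℝ (Fin d)) (hδ : δ = -(A⁻¹.toEuclideanLin g)) :
    A.toEuclideanLin δ = -g ∧ (1 / L) * ‖g‖ ^ 2 ≤ ⟪δ, g⟫ ∧ ‖δ‖ ^ 2 ≤ ‖g‖ ^ 2 / μ ^ 2 := by
  have hL : 0 < L := lt_of_lt_of_le hμ hμL
  have hdet := diag_det_isUnit hμ hup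
  have h1 : A.toEuclideanLin δ = -g := by
    rw [hδ, map_neg]
    have e : A.toEuclideanLin (A⁻¹.toEuclideanLin g) = (A * A⁻¹).toEuclideanLin g := by
      simp [Matrix.toEuclideanLin_apply, Matrix.mulVec_mulVec]
    rw [e, Matrix.mul_nonsing_inv A hdet]
    simp [Matrix.toEuclideanLin_apply]
  refine ⟨h1, ?_, ?_⟩ <;>
  · have hP1 : (L • (1 : Matrix (Fin d) (Fin d) ℝ) - (-A)).PosSemidef := by
      have e : L • (1 : Matrix (Fin d) (Fin d) ℝ) - (-A) = A + L • 1 := by abel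
      rw [e]; exact hlo
    have hP2 : ((-A) - μ • (1 : Matrix (Fin d) (Fin d) ℝ)).PosSemidef := by
      have e : (-A) - μ • (1 : Matrix (Fin d) (Fin d) ℝ) = -(μ • 1) - A := by abel
      rw [e]; exact hup
    have hPpsd : (-A).PosSemidef := (neg_diag_posdef hμ hup).posSemidef
    have hPg : (-A).toEuclideanLin δ = g := by
      have e : (-A).toEuclideanLin δ = -(A.toEuclideanLin δ) := by simp [map_neg]
      rw [e, h1, neg_neg]
    first
    | · have key := norm_map_sq_le hPpsd hP1 δ
        rw [hPg] at key
        rw [div_mul_eq_mul_div, div_le_iff₀ hL]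
        linarith
    | · have hlow := inner_lower hP2 δ
        rw [hPg] at hlow
        have hcs := real_inner_le_norm δ g
        rw [le_div_iff₀ (by positivity)]
        nlinarith [norm_nonneg δ, norm_nonneg g, sq_nonneg (‖g‖ - μ * ‖δ‖),
          mul_le_mul_of_nonneg_left (hlow.trans hcs) hμ.le]

end SFP

open SFP

set_option maxHeartbeats 1000000 in
/-- Convergence of simultaneous full-step fictitious play for a quadratic social welfare
`W(u) = c₀ + ⟨b, u⟩ + (1/2)uᵀMu` on `(ℝ^d)^N`, where `M` is a symmetric block matrix with
`d×d` blocks `M n m` and `g u n = b n + Σ_m M n m (u m)` is the `n`-th block of `∇W(u)`.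
Assume `−L·I ⪯ M_nn ⪯ −μ·I` with `0 < μ ≤ L`, the off-diagonal spectral norms are at most
`ε ≥ 0` with `ε < μ²/(N·L)`, and the update is `u^{t+1}_n = u^t_n − M_nn⁻¹ g_n(u^t)`. Then
each step improves the welfare by at least `(1/2)(1/L − εN/μ²)Σ_n‖g_n(u^t)‖²`, the welfare
sequence is nondecreasing, `M` is negative definite, `W` is bounded above, and `W(u^t)`
converges. -/
theorem simultaneous_fictitious_play_convergence {d N : ℕ} (hd : 1 ≤ d) (hN : 1 ≤ N)
    (M : Fin N → Fin N → Matrix (Fin d) (Fin d) ℝ)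
    (hsymm : ∀ n m, (M n m)ᵀ = M m n)
    (μ L ε : ℝ) (hμ : 0 < μ) (hμL : μ ≤ L) (hε : 0 ≤ ε)
    (hεsmall : ε < μ ^ 2 / (N * L))
    (hlower : ∀ n, (M n n + L • (1 : Matrix (Fin d) (Fin d) ℝ)).PosSemidef)
    (hupper : ∀ n, (-(μ • (1 : Matrix (Fin d) (Fin d) ℝ)) - M n n).PosSemidef)
    (hoff : ∀ n m, n ≠ m → ‖toEuclideanCLM (𝕜 := ℝ) (M n m)‖ ≤ ε)
    (b : Fin N → EuclideanSpace ℝ (Fin d)) (c₀ : ℝ)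
    (W : (Fin N → EuclideanSpace ℝ (Fin d)) → ℝ)
    (hW : ∀ u, W u = c₀ + (∑ n, ⟪b n, u n⟫) +
      (1 / 2) * ∑ n, ∑ m, ⟪u n, (M n m).toEuclideanLin (u m)⟫)
    (g : (Fin N → EuclideanSpace ℝ (Fin d)) → Fin N → EuclideanSpace ℝ (Fin d))
    (hg : ∀ u n, g u n = b n + ∑ m, (M n m).toEuclideanLin (u m))
    (u : ℕ → Fin N → EuclideanSpace ℝ (Fin d))
    (hiter : ∀ t n, u (t + 1) n = u t n - (M n n)⁻¹.toEuclideanLin (g (u t) n)) :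
    (∀ t : ℕ,
      W (u t) + (1 / 2) * (1 / L - ε * N / μ ^ 2) * ∑ n, ‖g (u t) n‖ ^ 2 ≤ W (u (t + 1))) ∧
    Monotone (fun t => W (u t)) ∧
    (-(Matrix.of fun p q : Fin N × Fin d => M p.1 q.1 p.2 q.2)).PosDef ∧
    BddAbove (Set.range W) ∧
    ∃ l : ℝ, Tendsto (fun t => W (u t)) atTop (nhds l) := by
  classical
  have hL : 0 < L := lt_of_lt_of_le hμ hμL
  have hNR : (1 : ℝ) ≤ N := by exact_mod_cast hN
  have hN0 : (0 : ℝ) < N := by linarith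
  have hεNL : ε * (N * L) < μ ^ 2 := by
    rwa [← lt_div_iff₀ (by positivity)]
  have hεNμ : ε * N < μ := by
    nlinarith [mul_le_mul_of_nonneg_left hμL hμ.le]
  have hcoefpos : 0 ≤ 1 / L - ε * N / μ ^ 2 := by
    rw [sub_nonneg, div_le_div_iff₀ (by positivity) hL]
    nlinarith
  -- pointwise off-diagonal bound
  have hoffb : ∀ (n m : Fin N), n ≠ m → ∀ x y : EuclideanSpace ℝ (Fin d),
      |⟪x, (M n m).toEuclideanLin y⟫| ≤ ε * (‖x‖ * ‖y‖) := by
    intro n m hnm x y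
    have h2 : ‖(M n m).toEuclideanLin y‖ ≤ ε * ‖y‖ := by
      have e : (M n m).toEuclideanLin y = toEuclideanCLM (𝕜 := ℝ) (M n m) y := by
        rw [← Matrix.coe_toEuclideanCLM_eq_toEuclideanLin]; rfl
      rw [e]
      exact le_trans ((toEuclideanCLM (𝕜 := ℝ) (M n m)).le_opNorm y)
        (mul_le_mul_of_nonneg_right (hoff n m hnm) (norm_nonneg y))
    calc |⟪x, (M n m).toEuclideanLin y⟫| ≤ ‖x‖ * ‖(M n m).toEuclideanLin y‖ :=
          abs_real_inner_le_norm _ _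
      _ ≤ ‖x‖ * (ε * ‖y‖) := mul_le_mul_of_nonneg_left h2 (norm_nonneg x)
      _ = ε * (‖x‖ * ‖y‖) := by ring
  -- off-diagonal sum bound
  have hsumoff : ∀ v : Fin N → EuclideanSpace ℝ (Fin d),
      |∑ n, ∑ m ∈ Finset.univ.erase n, ⟪v n, (M n m).toEuclideanLin (v m)⟫|
        ≤ ε * N * ∑ n, ‖v n‖ ^ 2 := by
    intro v
    have step1 : |∑ n, ∑ m ∈ Finset.univ.erase n, ⟪v n, (M n m).toEuclideanLin (v m)⟫|
        ≤ ∑ n, ∑ m ∈ Finset.univ.erase n, ε * (‖v n‖ * ‖v m‖) := by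
      refine le_trans (Finset.abs_sum_le_sum_abs _ _) (Finset.sum_le_sum fun n _ => ?_)
      refine le_trans (Finset.abs_sum_le_sum_abs _ _) (Finset.sum_le_sum fun m hm => ?_)
      exact hoffb n m (Finset.ne_of_mem_erase hm).symm _ _
    have step2 : ∑ n, ∑ m ∈ Finset.univ.erase n, ε * (‖v n‖ * ‖v m‖)
        ≤ ∑ n : Fin N, ∑ m : Fin N, ε * (‖v n‖ * ‖v m‖) :=
      Finset.sum_le_sum fun n _ =>
        Finset.sum_le_sum_of_subset_of_nonneg (Finset.erase_subset _ _)
          (fun m _ _ => by positivity)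
    have step3 : ∑ n : Fin N, ∑ m : Fin N, ε * (‖v n‖ * ‖v m‖)
        = ε * (∑ n, ‖v n‖) ^ 2 := by
      rw [sq, Finset.sum_mul_sum, Finset.mul_sum]
      exact Finset.sum_congr rfl fun n _ => by rw [Finset.mul_sum]
    have step4 : (∑ n, ‖v n‖) ^ 2 ≤ (N : ℝ) * ∑ n, ‖v n‖ ^ 2 := by
      simpa using sq_sum_le_card_mul_sum_sq (s := Finset.univ) (f := fun n : Fin N => ‖v n‖)
    calc |∑ n, ∑ m ∈ Finset.univ.erase n, ⟪v n, (M n m).toEuclideanLin (v m)⟫|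
        ≤ ∑ n, ∑ m ∈ Finset.univ.erase n, ε * (‖v n‖ * ‖v m‖) := step1
      _ ≤ ∑ n : Fin N, ∑ m : Fin N, ε * (‖v n‖ * ‖v m‖) := step2
      _ = ε * (∑ n, ‖v n‖) ^ 2 := step3
      _ ≤ ε * ((N : ℝ) * ∑ n, ‖v n‖ ^ 2) := mul_le_mul_of_nonneg_left step4 hε
      _ = ε * N * ∑ n, ‖v n‖ ^ 2 := by ring
  -- diagonal bound
  have hdiag : ∀ (n : Fin N) (x : EuclideanSpace ℝ (Fin d)),
      ⟪x, (M n n).toEuclideanLin x⟫ ≤ -μ * ‖x‖ ^ 2 := by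
    intro n x
    have h := psd_inner_nonneg (hupper n) x
    have h1 : (1 : Matrix (Fin d) (Fin d) ℝ).toEuclideanLin x = x := by
      simp [Matrix.toEuclideanLin_apply]
    have e : (-(μ • (1 : Matrix (Fin d) (Fin d) ℝ)) - M n n).toEuclideanLin x
        = -(μ • x) - (M n n).toEuclideanLin x := by
      rw [map_sub, map_neg, _root_.map_smul]; simp [h1]
    rw [e, inner_sub_right, inner_neg_right, real_inner_smul_right,
      real_inner_self_eq_norm_sq] at h
    linarith
  -- full quadratic bound
  have hquad : ∀ v : Fin N → EuclideanSpace ℝ (Fin d),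
      ∑ n, ∑ m, ⟪v n, (M n m).toEuclideanLin (v m)⟫ ≤ (ε * N - μ) * ∑ n, ‖v n‖ ^ 2 := by
    intro v
    have hsplit : ∑ n, ∑ m, ⟪v n, (M n m).toEuclideanLin (v m)⟫
        = ∑ n, ⟪v n, (M n n).toEuclideanLin (v n)⟫
          + ∑ n, ∑ m ∈ Finset.univ.erase n, ⟪v n, (M n m).toEuclideanLin (v m)⟫ := by
      rw [← Finset.sum_add_distrib]
      exact Finset.sum_congr rfl fun n _ =>
        (Finset.add_sum_erase _ _ (Finset.mem_univ n)).symm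
    have h1 : ∑ n, ⟪v n, (M n n).toEuclideanLin (v n)⟫ ≤ ∑ n, -μ * ‖v n‖ ^ 2 :=
      Finset.sum_le_sum fun n _ => hdiag n (v n)
    have h3 : ∑ n, -μ * ‖v n‖ ^ 2 = -μ * ∑ n, ‖v n‖ ^ 2 := (Finset.mul_sum _ _ _).symm
    have h4 := (abs_le.mp (hsumoff v)).2
    rw [hsplit]
    rw [h3] at h1
    nlinarith [h1, h4]
  -- step inequality
  have hstep : ∀ t : ℕ,
      W (u t) + (1 / 2) * (1 / L - ε * N / μ ^ 2) * ∑ n, ‖g (u t) n‖ ^ 2 ≤ W (u (t + 1)) := by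
    intro t
    set v : Fin N → EuclideanSpace ℝ (Fin d) := u t with hv
    set gt : Fin N → EuclideanSpace ℝ (Fin d) := g (u t) with hgt
    set δ : Fin N → EuclideanSpace ℝ (Fin d) := fun n => u (t + 1) n - u t n with hδdef
    have hδ : ∀ n, δ n = -((M n n)⁻¹.toEuclideanLin (gt n)) := by
      intro n
      rw [hδdef]
      simp only [hiter t n]
      abel
    have hw : ∀ n, u (t + 1) n = v n + δ n := by
      intro n
      show u (t + 1) n = u t n + (u (t + 1) n - u t n)
      rw [add_sub_cancel]
    have hbf := fun n => block_facts hμ hμL (hlower n) (hupper n) (gt n) (δ n) (hδ n)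
    have hTδ : ∀ n, (M n n).toEuclideanLin (δ n) = -(gt n) := fun n => (hbf n).1
    have hB : ∀ n, (1 / L) * ‖gt n‖ ^ 2 ≤ ⟪δ n, gt n⟫ := fun n => (hbf n).2.1
    have hC : ∀ n, ‖δ n‖ ^ 2 ≤ ‖gt n‖ ^ 2 / μ ^ 2 := fun n => (hbf n).2.2
    have hq : ∀ n m, ⟪u (t + 1) n, (M n m).toEuclideanLin (u (t + 1) m)⟫
        = ⟪v n, (M n m).toEuclideanLin (v m)⟫ + ⟪v n, (M n m).toEuclideanLin (δ m)⟫
          + (⟪δ n, (M n m).toEuclideanLin (v m)⟫ + ⟪δ n, (M n m).toEuclideanLin (δ m)⟫) := by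
      intro n m
      rw [hw n, hw m, map_add, inner_add_left, inner_add_right, inner_add_right]
    have hswap : ∑ n, ∑ m, ⟪v n, (M n m).toEuclideanLin (δ m)⟫
        = ∑ n, ∑ m, ⟪δ n, (M n m).toEuclideanLin (v m)⟫ := by
      have e : ∀ n m : Fin N, ⟪v n, (M n m).toEuclideanLin (δ m)⟫
          = ⟪δ m, (M m n).toEuclideanLin (v n)⟫ := by
        intro n m
        rw [inner_transpose, hsymm n m, real_inner_comm]
      simp_rw [e]
      exact Finset.sum_comm
    have hb2 : ∑ n, ⟪b n, u (t + 1) n⟫ = ∑ n, ⟪b n, v n⟫ + ∑ n, ⟪δ n, b n⟫ := by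
      rw [← Finset.sum_add_distrib]
      exact Finset.sum_congr rfl fun n _ => by
        rw [hw n, inner_add_right, real_inner_comm (δ n)]
    have hg2 : ∑ n, ⟪δ n, gt n⟫
        = ∑ n, ⟪δ n, b n⟫ + ∑ n, ∑ m, ⟪δ n, (M n m).toEuclideanLin (v m)⟫ := by
      rw [← Finset.sum_add_distrib]
      refine Finset.sum_congr rfl fun n _ => ?_
      rw [hgt, hg, inner_add_right, inner_sum]
    have hqq : ∑ n, ∑ m, ⟪u (t + 1) n, (M n m).toEuclideanLin (u (t + 1) m)⟫
        = ∑ n, ∑ m, ⟪v n, (M n m).toEuclideanLin (v m)⟫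
          + 2 * ∑ n, ∑ m, ⟪δ n, (M n m).toEuclideanLin (v m)⟫
          + ∑ n, ∑ m, ⟪δ n, (M n m).toEuclideanLin (δ m)⟫ := by
      simp_rw [hq, Finset.sum_add_distrib]
      rw [hswap]
      ring
    have hWnew : W (u (t + 1)) = W v + ∑ n, ⟪δ n, gt n⟫
        + (1 / 2) * ∑ n, ∑ m, ⟪δ n, (M n m).toEuclideanLin (δ m)⟫ := by
      rw [hW (u (t + 1)), hW v, hb2, hqq]
      linarith [hg2]
    have hdsplit : ∑ n, ∑ m, ⟪δ n, (M n m).toEuclideanLin (δ m)⟫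
        = -∑ n, ⟪δ n, gt n⟫
          + ∑ n, ∑ m ∈ Finset.univ.erase n, ⟪δ n, (M n m).toEuclideanLin (δ m)⟫ := by
      rw [← Finset.sum_neg_distrib, ← Finset.sum_add_distrib]
      refine Finset.sum_congr rfl fun n _ => ?_
      rw [← Finset.add_sum_erase _ _ (Finset.mem_univ n), hTδ n, inner_neg_right]
    have hSgnn : (0:ℝ) ≤ ∑ n, ‖gt n‖ ^ 2 := Finset.sum_nonneg fun n _ => sq_nonneg _
    have hdg : (1 / L) * ∑ n, ‖gt n‖ ^ 2 ≤ ∑ n, ⟪δ n, gt n⟫ := by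
      rw [Finset.mul_sum]
      exact Finset.sum_le_sum fun n _ => hB n
    have hdlt : ∑ n, ‖δ n‖ ^ 2 ≤ (∑ n, ‖gt n‖ ^ 2) / μ ^ 2 := by
      rw [Finset.sum_div]
      exact Finset.sum_le_sum fun n _ => hC n
    have hR := (abs_le.mp (hsumoff δ)).1
    have h5 : ε * N * ∑ n, ‖δ n‖ ^ 2 ≤ ε * N * ((∑ n, ‖gt n‖ ^ 2) / μ ^ 2) :=
      mul_le_mul_of_nonneg_left hdlt (mul_nonneg hε hN0.le)
    have hexp : ε * N * ((∑ n, ‖gt n‖ ^ 2) / μ ^ 2) = ε * N / μ ^ 2 * ∑ n, ‖gt n‖ ^ 2 := by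
      ring
    rw [hWnew, hdsplit]
    rw [hexp] at h5
    linarith [hdg, hR, h5]
  -- monotone
  have hmono : Monotone (fun t => W (u t)) := by
    apply monotone_nat_of_le_succ
    intro t
    have h := hstep t
    have hnn : 0 ≤ (1 / 2) * (1 / L - ε * N / μ ^ 2) * ∑ n, ‖g (u t) n‖ ^ 2 :=
      mul_nonneg (mul_nonneg (by norm_num) hcoefpos)
        (Finset.sum_nonneg fun n _ => sq_nonneg _)
    linarith
  -- pos def
  have hposdef : (-(Matrix.of fun p q : Fin N × Fin d => M p.1 q.1 p.2 q.2)).PosDef := by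
    rw [Matrix.posDef_iff_dotProduct_mulVec]
    constructor
    · show _ᴴ = _
      ext p q
      have h := congrFun (congrFun (hsymm q.1 p.1) p.2) q.2
      simp only [Matrix.transpose_apply] at h
      simp [Matrix.conjTranspose_apply, Matrix.neg_apply, Matrix.of_apply, h]
    · intro x hx
      set X : Fin N → EuclideanSpace ℝ (Fin d) :=
        fun n => (WithLp.equiv 2 (Fin d → ℝ)).symm (fun i => x (n, i)) with hX
      have hdot : x ⬝ᵥ ((Matrix.of fun p q : Fin N × Fin d => M p.1 q.1 p.2 q.2) *ᵥ x)
          = ∑ n, ∑ m, ⟪X n, (M n m).toEuclideanLin (X m)⟫ := by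
        simp only [inner_toELin, hX, Equiv.apply_symm_apply, dotProduct, Matrix.mulVec,
          Fintype.sum_prod_type, Matrix.of_apply, Finset.mul_sum]
        exact Finset.sum_congr rfl fun n _ => Finset.sum_comm
      have hb2 := hquad X
      have hpos : 0 < ∑ n, ‖X n‖ ^ 2 := by
        obtain ⟨p, hp⟩ := Function.ne_iff.mp hx
        have hXp : X p.1 ≠ 0 := by
          intro h0
          apply hp
          have := congrFun (congrArg (WithLp.equiv 2 (Fin d → ℝ)) h0) p.2
          simpa [hX] using this
        refine Finset.sum_pos' (fun n _ => sq_nonneg _) ⟨p.1, Finset.mem_univ _, ?_⟩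
        exact pow_pos (norm_pos_iff.mpr hXp) 2
      have hmul : 0 < (μ - ε * N) * ∑ n, ‖X n‖ ^ 2 :=
        mul_pos (by linarith) hpos
      show 0 < _
      rw [star_trivial, Matrix.neg_mulVec, dotProduct_neg, hdot]
      nlinarith [hb2, hmul]
  -- bdd above
  have hbdd : BddAbove (Set.range W) := by
    refine ⟨c₀ + ∑ n, ‖b n‖ ^ 2 / (2 * (μ - ε * N)), ?_⟩
    rintro x ⟨v, rfl⟩
    rw [hW]
    have h1 : ∑ n, ⟪b n, v n⟫ ≤ ∑ n, ‖b n‖ * ‖v n‖ :=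
      Finset.sum_le_sum fun n _ => real_inner_le_norm _ _
    have h2 := hquad v
    have h3 : ∀ n : Fin N, ‖b n‖ * ‖v n‖ + (ε * N - μ) / 2 * ‖v n‖ ^ 2
        ≤ ‖b n‖ ^ 2 / (2 * (μ - ε * N)) := by
      intro n
      rw [le_div_iff₀ (by linarith)]
      nlinarith [sq_nonneg ((μ - ε * N) * ‖v n‖ - ‖b n‖), norm_nonneg (b n), norm_nonneg (v n)]
    have h4 : ∑ n, (‖b n‖ * ‖v n‖ + (ε * N - μ) / 2 * ‖v n‖ ^ 2)
        ≤ ∑ n, ‖b n‖ ^ 2 / (2 * (μ - ε * N)) :=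
      Finset.sum_le_sum fun n _ => h3 n
    rw [Finset.sum_add_distrib] at h4
    have h5 : ∑ n, (ε * N - μ) / 2 * ‖v n‖ ^ 2 = (ε * N - μ) / 2 * ∑ n, ‖v n‖ ^ 2 :=
      (Finset.mul_sum _ _ _).symm
    rw [h5] at h4
    nlinarith [h1, h2, h4]
  refine ⟨hstep, hmono, hposdef, hbdd, ?_⟩
  obtain ⟨K, hK⟩ := hbdd
  exact ⟨_, tendsto_atTop_ciSup hmono ⟨K, by rintro x ⟨t, rfl⟩; exact hK ⟨u t, rfl⟩⟩⟩
end

section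
/- Let d, N ≥ 1 and let W : (ℝ^d)^N → ℝ be the quadratic function W(u) = c₀ + ⟨b, u⟩ + (1/2) uᵀ M u with every diagonal block M_{nn} negative definite. Fix n and let u' be obtained from u by updating only block n via u'_n = u_n − M_{nn}^{−1} g_n(u) and u'_m = u_m for m ≠ n. Then W(u') − W(u) = −(1/2) g_n(u)ᵀ M_{nn}^{−1} g_n(u) ≥ 0. Consequently, along any round-robin (sequential) fictitious-play trajectory u^t in which at each step exactly one block is updated by this rule, the sequence (W(u^t))_{t≥0} is nondecreasing, and if M is negative definite it converges. -/
open Matrix RealInnerProductSpace BigOperators Filter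

section Helpers

private lemma inner_te' {k : ℕ} (A : Matrix (Fin k) (Fin k) ℝ) (x y : EuclideanSpace ℝ (Fin k)) :
    ⟪x, A.toEuclideanLin y⟫ = (x : Fin k → ℝ) ⬝ᵥ A.mulVec y := by
  simp [Matrix.toEuclideanLin_apply, dotProduct, PiLp.inner_apply, mul_comm]

private lemma inner_dot' {k : ℕ} (x y : EuclideanSpace ℝ (Fin k)) :
    ⟪x, y⟫ = (x : Fin k → ℝ) ⬝ᵥ (y : Fin k → ℝ) := by
  simp [dotProduct, PiLp.inner_apply, mul_comm]

private lemma flatten_lin' {d N : ℕ} (b v : Fin N → EuclideanSpace ℝ (Fin d)) :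
    (∑ n, ⟪b n, v n⟫) =
      (fun p : Fin N × Fin d => b p.1 p.2) ⬝ᵥ (fun p : Fin N × Fin d => v p.1 p.2) := by
  simp [dotProduct, Fintype.sum_prod_type, PiLp.inner_apply, mul_comm]

private lemma flatten_quad' {d N : ℕ} (M : Fin N → Fin N → Matrix (Fin d) (Fin d) ℝ)
    (v : Fin N → EuclideanSpace ℝ (Fin d)) :
    (∑ n, ∑ m, ⟪v n, (M n m).toEuclideanLin (v m)⟫) =
      (fun p : Fin N × Fin d => v p.1 p.2) ⬝ᵥ
        (Matrix.of fun p q : Fin N × Fin d => M p.1 q.1 p.2 q.2) *ᵥ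
          (fun p : Fin N × Fin d => v p.1 p.2) := by
  simp only [inner_te', dotProduct, Matrix.mulVec, Fintype.sum_prod_type, Matrix.of_apply,
    Finset.mul_sum]
  refine Finset.sum_congr rfl fun n _ => ?_; rw [Finset.sum_comm]

private lemma quad_bound' {ι : Type*} [Fintype ι] [DecidableEq ι]
    (P : Matrix ι ι ℝ) (hP : P.PosDef) (β x : ι → ℝ) :
    β ⬝ᵥ x - (1 / 2) * (x ⬝ᵥ P *ᵥ x) ≤ (1 / 2) * ((P⁻¹ *ᵥ β) ⬝ᵥ β) := by
  have hdet : IsUnit P.det := isUnit_iff_ne_zero.2 hP.det_pos.ne'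
  set w := P⁻¹ *ᵥ β with hw
  have hPw : P *ᵥ w = β := by
    rw [hw, Matrix.mulVec_mulVec, Matrix.mul_nonsing_inv _ hdet, Matrix.one_mulVec]
  have hsym : Pᵀ = P := by simpa [Matrix.IsSymm] using hP.isHermitian
  have h0 : 0 ≤ (x - w) ⬝ᵥ P *ᵥ (x - w) := by
    simpa using hP.posSemidef.re_dotProduct_nonneg (x - w)
  have hwPx : w ⬝ᵥ P *ᵥ x = β ⬝ᵥ x := by
    rw [Matrix.dotProduct_mulVec, ← Matrix.mulVec_transpose, hsym, hPw]
  have hexp : (x - w) ⬝ᵥ P *ᵥ (x - w) =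
      x ⬝ᵥ P *ᵥ x - 2 * (β ⬝ᵥ x) + w ⬝ᵥ β := by
    rw [Matrix.mulVec_sub, sub_dotProduct, dotProduct_sub,
      dotProduct_sub, hPw, hwPx]
    have : x ⬝ᵥ β = β ⬝ᵥ x := dotProduct_comm _ _
    linarith
  linarith

private lemma step_identity' {d N : ℕ}
    (M : Fin N → Fin N → Matrix (Fin d) (Fin d) ℝ)
    (hsymm : ∀ n m, (M n m)ᵀ = M m n)
    (hdiag : ∀ n, (-(M n n)).PosDef)
    (b : Fin N → EuclideanSpace ℝ (Fin d)) (c₀ : ℝ)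
    (W : (Fin N → EuclideanSpace ℝ (Fin d)) → ℝ)
    (hW : ∀ v, W v = c₀ + (∑ n, ⟪b n, v n⟫) +
      (1 / 2) * ∑ n, ∑ m, ⟪v n, (M n m).toEuclideanLin (v m)⟫)
    (g : (Fin N → EuclideanSpace ℝ (Fin d)) → Fin N → EuclideanSpace ℝ (Fin d))
    (hg : ∀ v n, g v n = b n + ∑ m, (M n m).toEuclideanLin (v m))
    (n : Fin N) (u u' : Fin N → EuclideanSpace ℝ (Fin d))
    (h1 : u' n = u n - (M n n)⁻¹.toEuclideanLin (g u n))
    (h2 : ∀ m, m ≠ n → u' m = u m) :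
    W u' - W u = -(1 / 2) * ⟪g u n, (M n n)⁻¹.toEuclideanLin (g u n)⟫ ∧
      0 ≤ W u' - W u := by
  set A := M n n with hA
  set gn := g u n with hgn
  set δ : EuclideanSpace ℝ (Fin d) := u' n - u n with hδdef
  set D : Fin N → EuclideanSpace ℝ (Fin d) := fun i => if i = n then δ else 0 with hD
  have hu' : ∀ i, u' i = u i + D i := by
    intro i
    by_cases h : i = n
    · subst h; simp [hD, hδdef]
    · simp [hD, h, h2 i h]
  have key : W u' - W u = ⟪δ, gn⟫ + (1 / 2) * ⟪δ, A.toEuclideanLin δ⟫ := by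
    have hlin : (∑ m, ⟪b m, u' m⟫) = (∑ m, ⟪b m, u m⟫) + ⟪b n, δ⟫ := by
      have e1 : (∑ m, ⟪b m, u' m⟫) = ∑ m, (⟪b m, u m⟫ + ⟪b m, D m⟫) :=
        Finset.sum_congr rfl fun m _ => by rw [hu' m, inner_add_right]
      rw [e1, Finset.sum_add_distrib]
      congr 1
      rw [Finset.sum_eq_single n (fun m _ hm => by simp [hD, hm]) (by simp)]
      simp [hD]
    have hquad : (∑ i, ∑ j, ⟪u' i, (M i j).toEuclideanLin (u' j)⟫) =
        (∑ i, ∑ j, ⟪u i, (M i j).toEuclideanLin (u j)⟫) +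
        (2 * ⟪δ, ∑ j, (M n j).toEuclideanLin (u j)⟫ + ⟪δ, A.toEuclideanLin δ⟫) := by
      have e1 : (∑ i, ∑ j, ⟪u' i, (M i j).toEuclideanLin (u' j)⟫) =
          ∑ i, ∑ j, (⟪u i, (M i j).toEuclideanLin (u j)⟫
            + ⟪u i, (M i j).toEuclideanLin (D j)⟫
            + ⟪D i, (M i j).toEuclideanLin (u j)⟫
            + ⟪D i, (M i j).toEuclideanLin (D j)⟫) := by
        refine Finset.sum_congr rfl fun i _ => Finset.sum_congr rfl fun j _ => ?_
        rw [hu' i, hu' j, map_add, inner_add_left, inner_add_right, inner_add_right]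
        ring
      rw [e1]
      simp only [Finset.sum_add_distrib]
      have S1 : (∑ i, ∑ j, ⟪u i, (M i j).toEuclideanLin (D j)⟫) =
          ⟪δ, ∑ j, (M n j).toEuclideanLin (u j)⟫ := by
        rw [inner_sum]
        refine Finset.sum_congr rfl fun i _ => ?_
        rw [Finset.sum_eq_single n (fun j _ hj => by simp [hD, hj]) (by simp)]
        simp only [hD, if_pos rfl]
        rw [inner_te', inner_te', Matrix.dotProduct_mulVec, ← Matrix.mulVec_transpose,
          hsymm i n, dotProduct_comm]
      have S2 : (∑ i, ∑ j, ⟪D i, (M i j).toEuclideanLin (u j)⟫) =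
          ⟪δ, ∑ j, (M n j).toEuclideanLin (u j)⟫ := by
        rw [Finset.sum_eq_single n (fun i _ hi => by simp [hD, hi]) (by simp)]
        simp only [hD, if_pos rfl]
        rw [inner_sum]
      have S3 : (∑ i, ∑ j, ⟪D i, (M i j).toEuclideanLin (D j)⟫) =
          ⟪δ, A.toEuclideanLin δ⟫ := by
        rw [Finset.sum_eq_single n (fun i _ hi => by simp [hD, hi]) (by simp)]
        rw [Finset.sum_eq_single n (fun j _ hj => by simp [hD, hj]) (by simp)]
        simp [hD, hA]
      rw [S1, S2, S3]; ring
    rw [hW u', hW u, hlin, hquad, hgn, hg u n, inner_add_right, real_inner_comm (b n) δ]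
    rw [inner_sum]
    ring
  have hdetneg : IsUnit ((-A).det) := isUnit_iff_ne_zero.2 (hdiag n).det_pos.ne'
  have hAdet : IsUnit A.det := by
    have h := (hdiag n).det_pos
    rw [Matrix.det_neg] at h
    refine isUnit_iff_ne_zero.2 fun h0 => by simp [← hA, h0] at h
  have hAAinv : A * A⁻¹ = 1 := Matrix.mul_nonsing_inv _ hAdet
  have hδ : δ = -((A⁻¹).toEuclideanLin gn) := by
    rw [hδdef, h1]; abel
  have hval : ⟪δ, gn⟫ + (1 / 2) * ⟪δ, A.toEuclideanLin δ⟫ =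
      -(1 / 2) * ((gn : Fin d → ℝ) ⬝ᵥ A⁻¹.mulVec gn) := by
    have hδf : (δ : Fin d → ℝ) = -(A⁻¹.mulVec gn) := by
      rw [hδ]; rfl
    have hAδ : A.mulVec (δ : Fin d → ℝ) = -(gn : Fin d → ℝ) := by
      rw [hδf, Matrix.mulVec_neg, Matrix.mulVec_mulVec, hAAinv, Matrix.one_mulVec]
    rw [inner_dot', inner_te', hAδ, hδf]
    rw [neg_dotProduct, dotProduct_neg, neg_dotProduct, neg_neg]
    rw [dotProduct_comm ((gn : Fin d → ℝ)) (A⁻¹.mulVec gn)]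
    ring
  have hinvneg : A⁻¹ = -((-A)⁻¹) := by
    refine Matrix.inv_eq_right_inv ?_
    rw [mul_neg, ← Matrix.neg_mul, Matrix.mul_nonsing_inv _ hdetneg]
  have hnonneg : 0 ≤ (gn : Fin d → ℝ) ⬝ᵥ (-A)⁻¹.mulVec gn := by
    have := ((hdiag n).inv).posSemidef.re_dotProduct_nonneg (gn : Fin d → ℝ)
    simpa using this
  have hle : (gn : Fin d → ℝ) ⬝ᵥ A⁻¹.mulVec gn ≤ 0 := by
    rw [hinvneg, Matrix.neg_mulVec, dotProduct_neg]
    linarith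
  constructor
  · rw [key, hval, inner_te']
  · rw [key, hval]; nlinarith

end Helpers

/-- Sequential (round-robin) fictitious play for a quadratic social welfare
`W(u) = c₀ + ⟨b, u⟩ + (1/2)uᵀMu` on `(ℝ^d)^N`, where `M` is a symmetric block matrix with
negative definite diagonal blocks and `g u n = b n + Σ_m M n m (u m)` is the `n`-th block
of `∇W(u)`. Updating only block `n` via `u'_n = u_n − M_nn⁻¹ g_n(u)` yields
`W(u') − W(u) = −(1/2)⟨g_n(u), M_nn⁻¹ g_n(u)⟩ ≥ 0`; consequently, along any trajectory in
which at each step exactly one block is so updated, `W(u^t)` is nondecreasing, and if `M`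
is negative definite it converges. -/
theorem round_robin_fictitious_play {d N : ℕ} (hd : 1 ≤ d) (hN : 1 ≤ N)
    (M : Fin N → Fin N → Matrix (Fin d) (Fin d) ℝ)
    (hsymm : ∀ n m, (M n m)ᵀ = M m n)
    (hdiag : ∀ n, (-(M n n)).PosDef)
    (b : Fin N → EuclideanSpace ℝ (Fin d)) (c₀ : ℝ)
    (W : (Fin N → EuclideanSpace ℝ (Fin d)) → ℝ)
    (hW : ∀ v, W v = c₀ + (∑ n, ⟪b n, v n⟫) +
      (1 / 2) * ∑ n, ∑ m, ⟪v n, (M n m).toEuclideanLin (v m)⟫)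
    (g : (Fin N → EuclideanSpace ℝ (Fin d)) → Fin N → EuclideanSpace ℝ (Fin d))
    (hg : ∀ v n, g v n = b n + ∑ m, (M n m).toEuclideanLin (v m)) :
    (∀ (n : Fin N) (u u' : Fin N → EuclideanSpace ℝ (Fin d)),
      u' n = u n - (M n n)⁻¹.toEuclideanLin (g u n) →
      (∀ m, m ≠ n → u' m = u m) →
      W u' - W u = -(1 / 2) * ⟪g u n, (M n n)⁻¹.toEuclideanLin (g u n)⟫ ∧
        0 ≤ W u' - W u) ∧
    ∀ u : ℕ → Fin N → EuclideanSpace ℝ (Fin d),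
      (∀ t, ∃ n : Fin N,
        u (t + 1) n = u t n - (M n n)⁻¹.toEuclideanLin (g (u t) n) ∧
        ∀ m, m ≠ n → u (t + 1) m = u t m) →
      Monotone (fun t => W (u t)) ∧
      ((-(Matrix.of fun p q : Fin N × Fin d => M p.1 q.1 p.2 q.2)).PosDef →
        ∃ l : ℝ, Tendsto (fun t => W (u t)) atTop (nhds l)) := by
  refine ⟨fun n u u' h1 h2 => step_identity' M hsymm hdiag b c₀ W hW g hg n u u' h1 h2,
    fun u hu => ?_⟩
  have mono : Monotone (fun t => W (u t)) := by
    refine monotone_nat_of_le_succ fun t => ?_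
    obtain ⟨n, h1, h2⟩ := hu t
    have := (step_identity' M hsymm hdiag b c₀ W hW g hg n (u t) (u (t + 1)) h1 h2).2
    simpa using by linarith
  refine ⟨mono, fun hPD => ?_⟩
  set P : Matrix (Fin N × Fin d) (Fin N × Fin d) ℝ :=
    -(Matrix.of fun p q : Fin N × Fin d => M p.1 q.1 p.2 q.2) with hP
  set β : Fin N × Fin d → ℝ := fun p => b p.1 p.2 with hβ
  have hbound : ∀ v : Fin N → EuclideanSpace ℝ (Fin d),
      W v ≤ c₀ + (1 / 2) * ((P⁻¹ *ᵥ β) ⬝ᵥ β) := by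
    intro v
    set x : Fin N × Fin d → ℝ := fun p => v p.1 p.2 with hx
    have hWv : W v = c₀ + (β ⬝ᵥ x - (1 / 2) * (x ⬝ᵥ P *ᵥ x)) := by
      rw [hW v, flatten_lin' b v, flatten_quad' M v]
      rw [hP, Matrix.neg_mulVec, dotProduct_neg]
      ring
    have := quad_bound' P hPD β x
    linarith [this, hWv.le, hWv.ge]
  have hbdd : BddAbove (Set.range fun t => W (u t)) :=
    ⟨c₀ + (1 / 2) * ((P⁻¹ *ᵥ β) ⬝ᵥ β), by rintro y ⟨t, rfl⟩; exact hbound (u t)⟩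
  exact ⟨_, tendsto_atTop_ciSup mono hbdd⟩
end

section
/- Let F : ℝ^n → ℝ^n and e : ℝ^n → ℝ^n be co-coercive with constants c₁ > 0 and c₂ > 0 respectively, and suppose the set S = {x ∈ ℝ^n : F(x) + e(x) = 0} is nonempty. Let (τ_k)_{k≥1} be step sizes with 0 < inf_k τ_k ≤ sup_k τ_k < min(c₁, c₂). Then for any starting point x⁰, the iteration x^k = x^{k−1} − τ_k (F(x^{k−1}) + e(x^{k−1})) converges to a point of S. -/
open RealInnerProductSpace Filter

set_option maxHeartbeats 1000000

def CoCoercive {n : ℕ} (G : EuclideanSpace ℝ (Fin n) → EuclideanSpace ℝ (Fin n)) (c : ℝ) : Prop :=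
  0 < c ∧ ∀ x y, c * ‖G x - G y‖ ^ 2 ≤ ⟪G x - G y, x - y⟫

private lemma cocoercive_lip {n : ℕ}
    {G : EuclideanSpace ℝ (Fin n) → EuclideanSpace ℝ (Fin n)} {c : ℝ}
    (h : CoCoercive G c) (x y : EuclideanSpace ℝ (Fin n)) :
    ‖G x - G y‖ ≤ c⁻¹ * ‖x - y‖ := by
  obtain ⟨hc, h2⟩ := h
  have h1 := h2 x y
  have h3 := real_inner_le_norm (G x - G y) (x - y)
  have hn : (0:ℝ) ≤ ‖G x - G y‖ := norm_nonneg _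
  have key : c * ‖G x - G y‖ ≤ ‖x - y‖ := by nlinarith [norm_nonneg (x - y)]
  calc ‖G x - G y‖ = c⁻¹ * (c * ‖G x - G y‖) := by field_simp
    _ ≤ c⁻¹ * ‖x - y‖ := by
        have : (0:ℝ) ≤ c⁻¹ := inv_nonneg.2 hc.le
        nlinarith

private lemma arith_step (a b c t A B P g2 : ℝ) (ha : 0 < a) (hat : a ≤ t)
    (htb : t ≤ b) (hbc : b < c)
    (hA : 0 ≤ A) (hB : 0 ≤ B) (hP : c * A + c * B ≤ P)
    (hg : 0 ≤ g2) (hg2 : g2 ≤ 2 * (A + B)) :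
    a * (c - b) * g2 + t ^ 2 * g2 ≤ 2 * t * P := by
  nlinarith [mul_nonneg (sub_nonneg.2 hat) (sub_nonneg.2 hbc.le),
    mul_nonneg (mul_nonneg (sub_nonneg.2 hat) (sub_nonneg.2 hbc.le)) hg,
    mul_nonneg (sub_nonneg.2 htb) hg, mul_nonneg ha.le hg,
    mul_nonneg (mul_nonneg ha.le (sub_nonneg.2 hbc.le)) (sub_nonneg.2 hg2),
    mul_nonneg (mul_nonneg (ha.trans_le hat).le (sub_nonneg.2 hbc.le)) (sub_nonneg.2 hg2),
    mul_nonneg (mul_nonneg (ha.trans_le hat).le (sub_nonneg.2 htb)) (sub_nonneg.2 hg2)]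

private lemma sqrt_trick {u : ℕ → ℝ} (hn : ∀ k, 0 ≤ u k)
    (h : Tendsto (fun k => u k ^ 2) atTop (nhds 0)) : Tendsto u atTop (nhds 0) := by
  have h2 : Tendsto (fun k => Real.sqrt (u k ^ 2)) atTop (nhds (Real.sqrt 0)) :=
    (Real.continuous_sqrt.tendsto 0).comp h
  simpa [Real.sqrt_sq (hn _), Real.sqrt_zero] using h2

/-- If `F` and `e` are co-coercive with constants `c₁, c₂ > 0`, the zero set
`S = {x : F x + e x = 0}` is nonempty, and the steps satisfy
`0 < inf τ_k ≤ sup τ_k < min(c₁, c₂)`, then the iteration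
`x^k = x^{k−1} − τ_k (F(x^{k−1}) + e(x^{k−1}))` converges to a point of `S`
from any starting point. -/
theorem two_stage_incremental_convergence {n : ℕ}
    (F e : EuclideanSpace ℝ (Fin n) → EuclideanSpace ℝ (Fin n)) (c₁ c₂ : ℝ)
    (hF : CoCoercive F c₁) (he : CoCoercive e c₂)
    (S : Set (EuclideanSpace ℝ (Fin n)))
    (hS : S = {x | F x + e x = 0}) (hSne : S.Nonempty)
    (τ : ℕ → ℝ) (a b : ℝ) (ha : 0 < a) (hab : ∀ k, a ≤ τ k ∧ τ k ≤ b)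
    (hb : b < min c₁ c₂)
    (x : ℕ → EuclideanSpace ℝ (Fin n))
    (hiter : ∀ k, x (k + 1) = x k - τ (k + 1) • (F (x k) + e (x k))) :
    ∃ xstar ∈ S, Tendsto x atTop (nhds xstar) := by
  set c := min c₁ c₂ with hc_def
  have hc1 : c ≤ c₁ := min_le_left _ _
  have hc2 : c ≤ c₂ := min_le_right _ _
  have hbc : b < c := hb
  have hδ : 0 < a * (c - b) := mul_pos ha (sub_pos.2 hbc)
  -- Key Fejér decrease inequality
  have key : ∀ z, F z + e z = 0 → ∀ k,
      ‖x (k+1) - z‖ ^ 2 + a * (c - b) * ‖F (x k) + e (x k)‖ ^ 2 ≤ ‖x k - z‖ ^ 2 := by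
    intro z hz k
    obtain ⟨hat, htb⟩ := hab (k+1)
    set t := τ (k+1) with ht_def
    set g := F (x k) + e (x k) with hg_def
    set u := x k - z with hu_def
    have hxe : x (k+1) - z = u - t • g := by
      rw [hiter k, hu_def, sub_right_comm]
    have hexp : ‖u - t • g‖ ^ 2 = ‖u‖^2 - 2 * (t * ⟪u, g⟫) + t^2 * ‖g‖^2 := by
      rw [norm_sub_sq_real, real_inner_smul_right, norm_smul]
      simp [Real.norm_eq_abs, mul_pow, sq_abs]
    have hF1 := hF.2 (x k) z
    have he1 := he.2 (x k) z
    set A := ‖F (x k) - F z‖ ^ 2 with hA_def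
    set B := ‖e (x k) - e z‖ ^ 2 with hB_def
    have hgs : g = (F (x k) - F z) + (e (x k) - e z) := by
      rw [hg_def, sub_add_sub_comm, hz, sub_zero]
    have hinner : c₁ * A + c₂ * B ≤ ⟪u, g⟫ := by
      rw [real_inner_comm, hgs, inner_add_left]
      have h1 : c₁ * A ≤ ⟪F (x k) - F z, u⟫ := hF1
      have h2 : c₂ * B ≤ ⟪e (x k) - e z, u⟫ := he1
      linarith
    have hinner' : c * A + c * B ≤ ⟪u, g⟫ := by
      have hA0 : (0:ℝ) ≤ A := sq_nonneg _
      have hB0 : (0:ℝ) ≤ B := sq_nonneg _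
      nlinarith
    have hg2 : ‖g‖^2 ≤ 2 * (A + B) := by
      rw [hgs, hA_def, hB_def]
      have h := norm_add_le (F (x k) - F z) (e (x k) - e z)
      nlinarith [mul_self_le_mul_self (norm_nonneg ((F (x k) - F z) + (e (x k) - e z))) h,
        sq_nonneg (‖F (x k) - F z‖ - ‖e (x k) - e z‖)]
    have harith := arith_step a b c t A B (⟪u, g⟫) (‖g‖^2) ha hat htb hbc
      (sq_nonneg _) (sq_nonneg _) hinner' (sq_nonneg _) hg2
    rw [hxe, hexp]
    linarith
  -- the field along the iterates tends to zero
  obtain ⟨xs, hxs⟩ := hSne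
  rw [hS] at hxs
  have hxs' : F xs + e xs = 0 := hxs
  set r : ℕ → ℝ := fun k => ‖x k - xs‖ ^ 2 with hr_def
  have hr_anti : Antitone r := antitone_nat_of_succ_le fun k => by
    have hk := key xs hxs' k
    show ‖x (k+1) - xs‖ ^ 2 ≤ ‖x k - xs‖ ^ 2
    nlinarith [mul_nonneg hδ.le (sq_nonneg ‖F (x k) + e (x k)‖)]
  have hr_bdd : BddBelow (Set.range r) := ⟨0, by rintro _ ⟨k, rfl⟩; exact sq_nonneg _⟩
  have hrlim : Tendsto r atTop (nhds (⨅ i, r i)) := tendsto_atTop_ciInf hr_anti hr_bdd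
  have hrlim' : Tendsto (fun k => r (k+1)) atTop (nhds (⨅ i, r i)) :=
    hrlim.comp (tendsto_add_atTop_nat 1)
  have hdiff : Tendsto (fun k => r k - r (k+1)) atTop (nhds 0) := by
    simpa using hrlim.sub hrlim'
  have hgsq : Tendsto (fun k => ‖F (x k) + e (x k)‖ ^ 2) atTop (nhds 0) := by
    apply squeeze_zero (fun k => sq_nonneg _)
      (g := fun k => (a * (c - b))⁻¹ * (r k - r (k+1)))
    · intro k
      have hk := key xs hxs' k
      rw [le_inv_mul_iff₀ hδ]
      show a * (c - b) * ‖F (x k) + e (x k)‖ ^ 2 ≤ ‖x k - xs‖ ^ 2 - ‖x (k+1) - xs‖ ^ 2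
      linarith
    · simpa using hdiff.const_mul ((a * (c - b))⁻¹)
  have hgnorm : Tendsto (fun k => ‖F (x k) + e (x k)‖) atTop (nhds 0) :=
    sqrt_trick (fun k => norm_nonneg _) hgsq
  have hgten : Tendsto (fun k => F (x k) + e (x k)) atTop (nhds 0) := by
    rw [tendsto_zero_iff_norm_tendsto_zero]
    exact hgnorm
  -- bounded, extract convergent subsequence
  have hbound : ∀ k, x k ∈ Metric.closedBall xs ‖x 0 - xs‖ := by
    intro k
    rw [Metric.mem_closedBall, dist_eq_norm]
    have h0 : ‖x k - xs‖ ^ 2 ≤ ‖x 0 - xs‖ ^ 2 := hr_anti (Nat.zero_le k)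
    nlinarith [norm_nonneg (x k - xs), norm_nonneg (x 0 - xs)]
  obtain ⟨xbar, -, φ, hφ, hsub⟩ :=
    (isCompact_closedBall xs ‖x 0 - xs‖).tendsto_subseq hbound
  -- limit of subsequence is a zero of F + e
  have hlip : ∀ y, ‖(F y + e y) - (F xbar + e xbar)‖ ≤ (c₁⁻¹ + c₂⁻¹) * ‖y - xbar‖ := by
    intro y
    have h1 := cocoercive_lip hF y xbar
    have h2 := cocoercive_lip he y xbar
    have hrw : (F y + e y) - (F xbar + e xbar) = (F y - F xbar) + (e y - e xbar) := by
      abel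
    rw [hrw]
    calc ‖(F y - F xbar) + (e y - e xbar)‖ ≤ ‖F y - F xbar‖ + ‖e y - e xbar‖ := norm_add_le _ _
      _ ≤ (c₁⁻¹ + c₂⁻¹) * ‖y - xbar‖ := by linarith [h1, h2]
  have hnorm0 : Tendsto (fun j => ‖x (φ j) - xbar‖) atTop (nhds 0) := by
    rw [← tendsto_iff_norm_sub_tendsto_zero]
    exact hsub
  have hGsub : Tendsto (fun j => F (x (φ j)) + e (x (φ j))) atTop (nhds (F xbar + e xbar)) := by
    rw [tendsto_iff_norm_sub_tendsto_zero]
    apply squeeze_zero (fun j => norm_nonneg _) (fun j => hlip (x (φ j)))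
    simpa using hnorm0.const_mul (c₁⁻¹ + c₂⁻¹)
  have hGsub0 : Tendsto (fun j => F (x (φ j)) + e (x (φ j))) atTop (nhds 0) :=
    hgten.comp hφ.tendsto_atTop
  have hGbar : F xbar + e xbar = 0 := tendsto_nhds_unique hGsub hGsub0
  -- Fejér monotonicity w.r.t. xbar gives full convergence
  set r' : ℕ → ℝ := fun k => ‖x k - xbar‖ ^ 2 with hr'_def
  have hr'_anti : Antitone r' := antitone_nat_of_succ_le fun k => by
    have hk := key xbar hGbar k
    show ‖x (k+1) - xbar‖ ^ 2 ≤ ‖x k - xbar‖ ^ 2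
    nlinarith [mul_nonneg hδ.le (sq_nonneg ‖F (x k) + e (x k)‖)]
  have hr'_bdd : BddBelow (Set.range r') := ⟨0, by rintro _ ⟨k, rfl⟩; exact sq_nonneg _⟩
  have hr'lim : Tendsto r' atTop (nhds (⨅ i, r' i)) := tendsto_atTop_ciInf hr'_anti hr'_bdd
  have hr'sub : Tendsto (fun j => r' (φ j)) atTop (nhds (⨅ i, r' i)) :=
    hr'lim.comp hφ.tendsto_atTop
  have hr'sub0 : Tendsto (fun j => r' (φ j)) atTop (nhds 0) := by
    have := hnorm0.pow 2
    simpa [hr'_def] using this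
  have hL : (⨅ i, r' i) = 0 := tendsto_nhds_unique hr'sub hr'sub0
  rw [hL] at hr'lim
  have hfinal : Tendsto (fun k => ‖x k - xbar‖) atTop (nhds 0) :=
    sqrt_trick (fun k => norm_nonneg _) hr'lim
  refine ⟨xbar, by rw [hS]; exact hGbar, ?_⟩
  rw [tendsto_iff_norm_sub_tendsto_zero]
  exact hfinal
end

section
/- Let (F^k)_{k≥1} be a sequence of maps ℝ^n → ℝ^n such that each F^k is co-coercive with constant c_k, with ρ := inf_k c_k > 1/2. Suppose all the F^k have the same nonempty zero set S = {x : F^k(x) = 0 for all k}, and that for every x ∉ S one has inf_k ‖F^k(x)‖ > 0. Then for any starting point x⁰, the sequence defined by x^k = x^{k−1} − F^k(x^{k−1}) converges to a point x* ∈ S. -/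
open RealInnerProductSpace Filter

/-- Convergence lemma (after Facchinei–Pang, Lemma 12.1.5): if each `F^k` is co-coercive
with constant `c_k`, `ρ = inf_k c_k > 1/2`, all `F^k` share the same nonempty zero set `S`,
and `inf_k ‖F^k(x)‖ > 0` for every `x ∉ S`, then the iteration `x^k = x^{k−1} − F^k(x^{k−1})`
converges to a point of `S` from any starting point. -/
theorem sequence_cocoercive_convergence {n : ℕ}
    (F : ℕ → EuclideanSpace ℝ (Fin n) → EuclideanSpace ℝ (Fin n)) (c : ℕ → ℝ)
    (hF : ∀ k, CoCoercive (F k) (c k))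
    (ρ : ℝ) (hρ : 1 / 2 < ρ) (hρc : ∀ k, ρ ≤ c k)
    (S : Set (EuclideanSpace ℝ (Fin n)))
    (hS : S = {x | ∀ k, F k x = 0}) (hSne : S.Nonempty)
    (hsep : ∀ x ∉ S, 0 < ⨅ k, ‖F k x‖)
    (x : ℕ → EuclideanSpace ℝ (Fin n))
    (hiter : ∀ k, x (k + 1) = x k - F (k + 1) (x k)) :
    ∃ xstar ∈ S, Tendsto x atTop (nhds xstar) := by
  have hρ0 : 0 < ρ := lt_trans (by norm_num) hρ
  -- key inequality
  have key : ∀ k, ∀ s ∈ S, ‖x (k+1) - s‖^2 + (2*ρ - 1) * ‖F (k+1) (x k)‖^2 ≤ ‖x k - s‖^2 := by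
    intro k s hs
    have hFs : F (k+1) s = 0 := by rw [hS] at hs; exact hs (k+1)
    have hco := (hF (k+1)).2 (x k) s
    rw [hFs, sub_zero] at hco
    have hcc : ρ * ‖F (k+1) (x k)‖^2 ≤ ⟪F (k+1) (x k), x k - s⟫ := by
      refine le_trans ?_ hco
      nlinarith [sq_nonneg ‖F (k+1) (x k)‖, hρc (k+1)]
    have heq : x (k+1) - s = (x k - s) - F (k+1) (x k) := by rw [hiter k]; abel
    rw [heq, @norm_sub_sq_real]
    have hsym := real_inner_comm (x k - s) (F (k+1) (x k))
    nlinarith [hcc]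
  have anti : ∀ z ∈ S, Antitone (fun k => ‖x k - z‖^2) := by
    intro z hz
    apply antitone_nat_of_succ_le
    intro k
    have h := key k z hz
    nlinarith [sq_nonneg ‖F (k+1) (x k)‖]
  obtain ⟨s0, hs0⟩ := hSne
  set a : ℕ → ℝ := fun k => ‖x k - s0‖^2 with ha
  have hanti := anti s0 hs0
  have hbdd : BddBelow (Set.range a) := ⟨0, by rintro _ ⟨k, rfl⟩; positivity⟩
  have hlim : Tendsto a atTop (nhds (⨅ k, a k)) := tendsto_atTop_ciInf hanti hbdd
  have hlim' : Tendsto (fun k => a (k+1)) atTop (nhds (⨅ k, a k)) :=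
    hlim.comp (tendsto_add_atTop_nat 1)
  have hdiff : Tendsto (fun k => a k - a (k+1)) atTop (nhds 0) := by
    simpa using hlim.sub hlim'
  -- g tends to 0
  have hgsq : Tendsto (fun k => ‖F (k+1) (x k)‖^2) atTop (nhds 0) := by
    have h2 : (0:ℝ) < 2*ρ - 1 := by linarith
    have hsq : Tendsto (fun k => (a k - a (k+1)) / (2*ρ - 1)) atTop (nhds 0) := by
      simpa using hdiff.div_const (2*ρ - 1)
    refine squeeze_zero (fun k => by positivity) (fun k => ?_) hsq
    rw [le_div_iff₀ h2]
    have hk := key k s0 hs0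
    simp only [ha]
    nlinarith [hk]
  have hg : Tendsto (fun k => ‖F (k+1) (x k)‖) atTop (nhds 0) := by
    have h := (Real.continuous_sqrt.tendsto 0).comp hgsq
    rw [Real.sqrt_zero] at h
    exact h.congr fun k => Real.sqrt_sq (norm_nonneg _)
  -- boundedness and subsequence
  have hball : ∀ k, x k ∈ Metric.closedBall s0 ‖x 0 - s0‖ := by
    intro k
    rw [Metric.mem_closedBall, dist_eq_norm]
    have hak : a k ≤ a 0 := hanti (Nat.zero_le k)
    have := Real.sqrt_le_sqrt hak
    rwa [Real.sqrt_sq (norm_nonneg _), Real.sqrt_sq (norm_nonneg _)] at this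
  obtain ⟨xstar, -, φ, hφ, hxφ⟩ :=
    (isCompact_closedBall s0 ‖x 0 - s0‖).tendsto_subseq hball
  -- Lipschitz
  have lip : ∀ k u v, ρ * ‖F k u - F k v‖ ≤ ‖u - v‖ := by
    intro k u v
    have h1 := (hF k).2 u v
    have h2 := real_inner_le_norm (F k u - F k v) (u - v)
    rcases ((norm_nonneg (F k u - F k v)).eq_or_lt.imp Eq.symm id) with h0 | h0
    · rw [h0, mul_zero]; exact norm_nonneg _
    · have hc := hρc k
      nlinarith
  -- xstar ∈ S
  have hxstarS : xstar ∈ S := by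
    by_contra hxs
    have hε := hsep xstar hxs
    have hbdd' : BddBelow (Set.range fun k => ‖F k xstar‖) :=
      ⟨0, by rintro _ ⟨k, rfl⟩; positivity⟩
    have hdist : Tendsto (fun j => ‖xstar - x (φ j)‖) atTop (nhds 0) := by
      have : Tendsto (fun j => dist (x (φ j)) xstar) atTop (nhds 0) :=
        tendsto_iff_dist_tendsto_zero.mp hxφ
      simpa [dist_eq_norm, norm_sub_rev] using this
    have hgφ : Tendsto (fun j => ‖F (φ j + 1) (x (φ j))‖) atTop (nhds 0) :=
      hg.comp hφ.tendsto_atTop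
    have hub : ∀ j, (⨅ k, ‖F k xstar‖) ≤ ‖F (φ j + 1) (x (φ j))‖ + ρ⁻¹ * ‖xstar - x (φ j)‖ := by
      intro j
      have h1 : (⨅ k, ‖F k xstar‖) ≤ ‖F (φ j + 1) xstar‖ := ciInf_le hbdd' _
      have h2 : ‖F (φ j + 1) xstar‖ ≤ ‖F (φ j + 1) xstar - F (φ j + 1) (x (φ j))‖ + ‖F (φ j + 1) (x (φ j))‖ := by
        simpa using norm_add_le (F (φ j + 1) xstar - F (φ j + 1) (x (φ j))) (F (φ j + 1) (x (φ j)))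
      have h3 : ‖F (φ j + 1) xstar - F (φ j + 1) (x (φ j))‖ ≤ ρ⁻¹ * ‖xstar - x (φ j)‖ := by
        have hl := lip (φ j + 1) xstar (x (φ j))
        rw [inv_mul_eq_div, le_div_iff₀ hρ0, mul_comm]
        exact hl
      linarith
    have htend : Tendsto (fun j => ‖F (φ j + 1) (x (φ j))‖ + ρ⁻¹ * ‖xstar - x (φ j)‖) atTop (nhds 0) := by
      have := hgφ.add (hdist.const_mul ρ⁻¹)
      simpa using this
    have := ge_of_tendsto' htend hub
    linarith
  -- convergence
  refine ⟨xstar, hxstarS, ?_⟩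
  have hantib := anti xstar hxstarS
  have hbddb : BddBelow (Set.range fun k => ‖x k - xstar‖^2) :=
    ⟨0, by rintro _ ⟨k, rfl⟩; positivity⟩
  have hlimb : Tendsto (fun k => ‖x k - xstar‖^2) atTop (nhds (⨅ k, ‖x k - xstar‖^2)) :=
    tendsto_atTop_ciInf hantib hbddb
  have hsub : Tendsto (fun j => ‖x (φ j) - xstar‖^2) atTop (nhds 0) := by
    have hdist : Tendsto (fun j => ‖x (φ j) - xstar‖) atTop (nhds 0) := by
      have : Tendsto (fun j => dist (x (φ j)) xstar) atTop (nhds 0) :=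
        tendsto_iff_dist_tendsto_zero.mp hxφ
      simpa [dist_eq_norm] using this
    simpa using hdist.mul hdist |>.congr (fun j => by ring)
  have hsub' : Tendsto (fun j => ‖x (φ j) - xstar‖^2) atTop (nhds (⨅ k, ‖x k - xstar‖^2)) :=
    hlimb.comp hφ.tendsto_atTop
  have hinf0 : (⨅ k, ‖x k - xstar‖^2) = 0 := tendsto_nhds_unique hsub' hsub
  rw [hinf0] at hlimb
  have hnorm : Tendsto (fun k => ‖x k - xstar‖) atTop (nhds 0) := by
    have h := (Real.continuous_sqrt.tendsto 0).comp hlimb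
    rw [Real.sqrt_zero] at h
    exact h.congr fun k => Real.sqrt_sq (norm_nonneg _)
  rw [tendsto_iff_norm_sub_tendsto_zero]
  exact hnorm
end
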